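/- Let w : ℤ → ℝ satisfy w_n = 2 for n ≥ 0 and the alternating block structure B_n (each block of length 2n with n entries 2 and n entries 1/2 arranged alternately by parity of n) on negative indices, and set n_k := 2k(2k−1) + k. Then for every i ∈ ℤ there exists a constant C_i > 0 such that for all ℓ, k ∈ ℕ: |(|i − n_k| + 1)^ℓ · w_{i−n_k} ⋯ w_{i−1}| ≤ C_i · (|i−n_k|+1)^ℓ / 2^k, and hence (|i−n_k|+1)^ℓ · |w_{i−n_k} ⋯ w_{i−1}| → 0 as k → ∞ for each fixed ℓ. -/

import Mathlib

open Filter Finset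

namespace Stmt19

noncomputable def eps (w : ℤ → ℝ) (t : ℤ) : ℤ := if w t = 2 then 1 else -1

lemma eps_spec {w : ℤ → ℝ} {t : ℤ} {e : ℤ} (ht : w t = (2:ℝ) ^ e)
    (he : e = 1 ∨ e = -1) : eps w t = e := by
  rcases he with rfl | rfl
  · have : w t = 2 := by rw [ht]; norm_num
    simp [eps, this]
  · have : w t = 1/2 := by rw [ht]; norm_num
    rw [eps, if_neg]; rw [this]; norm_num

lemma neg_one_pow_cases (n : ℕ) : ((-1:ℤ)) ^ n = 1 ∨ ((-1:ℤ)) ^ n = -1 := by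
  rcases Nat.even_or_odd n with h | h
  · left; exact h.neg_one_pow
  · right; exact h.neg_one_pow

section

variable {w : ℤ → ℝ}
variable (hpos : ∀ m : ℤ, 0 ≤ m → w m = 2)
variable (hblock₁ : ∀ n : ℕ, 1 ≤ n → ∀ j : ℕ, n * (n - 1) < j → j ≤ n * n →
      w (-(j : ℤ)) = (2 : ℝ) ^ ((-1 : ℤ) ^ (n + 1)))
variable (hblock₂ : ∀ n : ℕ, 1 ≤ n → ∀ j : ℕ, n * n < j → j ≤ n * (n + 1) →
      w (-(j : ℤ)) = (2 : ℝ) ^ ((-1 : ℤ) ^ n))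

include hpos hblock₁ hblock₂ in
lemma w_eq_pow (t : ℤ) : w t = (2:ℝ) ^ (eps w t) := by
  have hcls : w t = 2 ∨ w t = 1/2 := by
    rcases le_or_gt 0 t with ht | ht
    · left; exact hpos t ht
    · -- t < 0, t = -j with j ≥ 1
      obtain ⟨j, hj⟩ : ∃ j : ℕ, t = -(j:ℤ) := ⟨t.natAbs, by omega⟩
      have hj1 : 1 ≤ j := by omega
      subst hj
      have hs1 : 1 ≤ Nat.sqrt j := Nat.sqrt_pos.mpr (by omega)
      obtain ⟨p, hp⟩ : ∃ p, Nat.sqrt j = p + 1 := ⟨Nat.sqrt j - 1, by omega⟩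
      have hsle : (p+1) * (p+1) ≤ j := by
        have h := Nat.sqrt_le' j; rw [hp] at h; simpa [pow_two] using h
      have hslt : j < (p+2) * (p+2) := by
        have h := Nat.lt_succ_sqrt' j; rw [hp] at h
        simpa [pow_two, Nat.succ_eq_add_one] using h
      have hval : ∃ n : ℕ, w (-(j:ℤ)) = (2:ℝ) ^ ((-1:ℤ) ^ n) := by
        rcases le_or_gt j ((p+1)*(p+1)) with h1 | h1
        · refine ⟨p+2, hblock₁ (p+1) (by omega) j ?_ h1⟩
          simpa [Nat.add_sub_cancel] using (show (p+1)*p < j by nlinarith)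
        · rcases le_or_gt j ((p+1)*(p+2)) with h2 | h2
          · exact ⟨p+1, hblock₂ (p+1) (by omega) j h1 h2⟩
          · refine ⟨p+3, hblock₁ (p+2) (by omega) j ?_ (by nlinarith)⟩
            simpa [Nat.add_sub_cancel] using (show (p+2)*(p+1) < j by nlinarith)
      obtain ⟨n, hn⟩ := hval
      rcases neg_one_pow_cases n with h | h <;> rw [h] at hn
      · left; rw [hn]; norm_num
      · right; rw [hn]; norm_num
  rcases hcls with h | h
  · rw [eps, if_pos h, h]; norm_num
  · rw [eps, if_neg (by rw [h]; norm_num), h]; norm_num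

lemma eps_abs (t : ℤ) : |eps w t| ≤ 1 := by
  rw [eps]; split <;> simp

include hblock₁ in
lemma eps_first (n : ℕ) (hn : 1 ≤ n) (j : ℕ) (h1 : n * (n-1) < j) (h2 : j ≤ n * n) :
    eps w (-(j:ℤ)) = (-1:ℤ) ^ (n+1) :=
  eps_spec (hblock₁ n hn j h1 h2) (neg_one_pow_cases (n+1))

include hblock₂ in
lemma eps_second (n : ℕ) (hn : 1 ≤ n) (j : ℕ) (h1 : n * n < j) (h2 : j ≤ n * (n+1)) :
    eps w (-(j:ℤ)) = (-1:ℤ) ^ n :=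
  eps_spec (hblock₂ n hn j h1 h2) (neg_one_pow_cases n)

/-- partial exponent sum over negative indices -/
noncomputable def sig (w : ℤ → ℝ) (N : ℕ) : ℤ := ∑ m ∈ Finset.Ioc 0 N, eps w (-(m:ℤ))

lemma sig_add (a b : ℕ) (hab : a ≤ b) :
    sig w b = sig w a + ∑ m ∈ Finset.Ioc a b, eps w (-(m:ℤ)) := by
  rw [sig, sig, Finset.sum_Ioc_consecutive _ (Nat.zero_le a) hab]

include hblock₁ hblock₂ in
lemma sig_block (n : ℕ) : sig w (n * (n+1)) = 0 := by
  induction n with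
  | zero => simp [sig]
  | succ n ih =>
    have e1 : sig w ((n+1) * (n+1)) = sig w (n * (n+1)) +
        ∑ m ∈ Finset.Ioc (n * (n+1)) ((n+1)*(n+1)), eps w (-(m:ℤ)) :=
      sig_add _ _ (by nlinarith)
    have e2 : sig w ((n+1) * (n+2)) = sig w ((n+1) * (n+1)) +
        ∑ m ∈ Finset.Ioc ((n+1)*(n+1)) ((n+1)*(n+2)), eps w (-(m:ℤ)) :=
      sig_add _ _ (by nlinarith)
    have s1 : ∑ m ∈ Finset.Ioc (n * (n+1)) ((n+1)*(n+1)), eps w (-(m:ℤ))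
        = ((n:ℤ)+1) * (-1:ℤ) ^ (n+2) := by
      rw [Finset.sum_congr rfl (fun m hm => ?_), Finset.sum_const, Nat.card_Ioc,
        nsmul_eq_mul]
      · congr 1
        push_cast
        have : (n+1)*(n+1) - n*(n+1) = n + 1 := by nlinarith [Nat.sub_add_cancel (show n*(n+1) ≤ (n+1)*(n+1) by nlinarith)]
        rw [this]; push_cast; ring
      · simp only [Finset.mem_Ioc] at hm
        exact eps_first hblock₁ (n+1) (by omega) m (by simpa [Nat.add_sub_cancel, Nat.mul_comm] using hm.1) hm.2
    have s2 : ∑ m ∈ Finset.Ioc ((n+1)*(n+1)) ((n+1)*(n+2)), eps w (-(m:ℤ))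
        = ((n:ℤ)+1) * (-1:ℤ) ^ (n+1) := by
      rw [Finset.sum_congr rfl (fun m hm => ?_), Finset.sum_const, Nat.card_Ioc,
        nsmul_eq_mul]
      · congr 1
        have : (n+1)*(n+2) - (n+1)*(n+1) = n + 1 := by nlinarith [Nat.sub_add_cancel (show (n+1)*(n+1) ≤ (n+1)*(n+2) by nlinarith)]
        rw [this]; push_cast; ring
      · simp only [Finset.mem_Ioc] at hm
        exact eps_second hblock₂ (n+1) (by omega) m hm.1 hm.2
    have : ((n:ℤ)+1) * (-1:ℤ) ^ (n+2) + ((n:ℤ)+1) * (-1:ℤ) ^ (n+1) = 0 := by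
      rw [pow_succ ((-1:ℤ)) (n+1)]; ring
    rw [show (n+1) * ((n+1)+1) = (n+1)*(n+2) by ring, e2, e1, ih]
    linarith

include hblock₁ hblock₂ in
lemma sig_nk (k : ℕ) (hk : 1 ≤ k) : sig w (2*k*(2*k-1) + k) = -(k:ℤ) := by
  have hb : sig w (2*k*(2*k-1)) = 0 := by
    obtain ⟨a, ha⟩ : ∃ a, 2*k = a + 1 := ⟨2*k-1, by omega⟩
    rw [ha]
    simp only [Nat.add_sub_cancel]
    rw [Nat.mul_comm]
    exact sig_block hblock₁ hblock₂ a
  have e1 : sig w (2*k*(2*k-1) + k) = sig w (2*k*(2*k-1)) +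
      ∑ m ∈ Finset.Ioc (2*k*(2*k-1)) (2*k*(2*k-1)+k), eps w (-(m:ℤ)) :=
    sig_add _ _ (by omega)
  have hconst : ∀ m ∈ Finset.Ioc (2*k*(2*k-1)) (2*k*(2*k-1)+k),
      eps w (-(m:ℤ)) = (-1:ℤ) := by
    intro m hm
    simp only [Finset.mem_Ioc] at hm
    have he := eps_first hblock₁ (2*k) (by omega) m hm.1
      (by nlinarith [hm.2, (show 2*k-1+1 = 2*k by omega)])
    rw [he, Odd.neg_one_pow ⟨k, by ring⟩]
  have s1 : ∑ m ∈ Finset.Ioc (2*k*(2*k-1)) (2*k*(2*k-1)+k), eps w (-(m:ℤ)) = -(k:ℤ) := by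
    rw [Finset.sum_congr rfl hconst, Finset.sum_const, Nat.card_Ioc,
      Nat.add_sub_cancel_left]
    simp
  rw [e1, hb, s1, zero_add]

/-- exponent sum for shifted products -/
noncomputable def T (w : ℤ → ℝ) (i : ℤ) (N : ℕ) : ℤ :=
  ∑ r ∈ Finset.range N, eps w (i - 1 - r)

lemma T_step (i : ℤ) (N : ℕ) :
    T w (i+1) N = T w i N + eps w i - eps w (i - N) := by
  have h1 : ∑ r ∈ Finset.range (N+1), eps w (i - r)
      = ∑ r ∈ Finset.range N, eps w (i - r) + eps w (i - N) :=
    Finset.sum_range_succ _ _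
  have h2 : ∑ r ∈ Finset.range (N+1), eps w (i - r)
      = ∑ r ∈ Finset.range N, eps w (i - (r+1:ℕ)) + eps w (i - (0:ℕ)) :=
    Finset.sum_range_succ' _ _
  have h3 : ∑ r ∈ Finset.range N, eps w (i - (r+1:ℕ))
      = ∑ r ∈ Finset.range N, eps w (i - 1 - r) := by
    refine Finset.sum_congr rfl (fun r _ => ?_)
    congr 1; push_cast; ring
  have h4 : T w (i+1) N = ∑ r ∈ Finset.range N, eps w (i - r) := by
    refine Finset.sum_congr rfl (fun r _ => ?_)
    congr 1; ring
  rw [h4]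
  rw [h3] at h2
  simp only [Nat.cast_zero, sub_zero] at h2
  have h5 : T w i N = ∑ r ∈ Finset.range N, eps w (i - 1 - r) := rfl
  omega

lemma T_close (N : ℕ) : ∀ i : ℤ, |T w i N - T w 0 N| ≤ 2 * |i| := by
  intro i
  induction i using Int.induction_on with
  | zero => simp
  | succ n ih =>
    have hs := T_step (w := w) (n:ℤ) N
    have h1 := eps_abs (w := w) (n:ℤ)
    have h2 := eps_abs (w := w) ((n:ℤ) - N)
    have e1 : |((n:ℤ))| = (n:ℤ) := abs_of_nonneg (by positivity)
    have e2 : |((n:ℤ)) + 1| = (n:ℤ) + 1 := abs_of_nonneg (by positivity)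
    rw [abs_le] at *
    constructor <;> linarith [hs]
  | pred n ih =>
    have hs := T_step (w := w) (-(n:ℤ) - 1) N
    have h1 := eps_abs (w := w) (-(n:ℤ) - 1)
    have h2 := eps_abs (w := w) (-(n:ℤ) - 1 - N)
    have e1 : |(-(n:ℤ))| = (n:ℤ) := by rw [abs_neg]; exact abs_of_nonneg (by positivity)
    have e2 : |(-(n:ℤ)) - 1| = (n:ℤ) + 1 := by
      rw [abs_of_nonpos (by omega)]; ring
    rw [show (-(n:ℤ) - 1 + 1) = -(n:ℤ) by ring] at hs
    rw [abs_le] at *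
    constructor <;> linarith [hs]

lemma T_zero (N : ℕ) : T w 0 N = sig w N := by
  rw [T, sig, ← Finset.Ico_add_one_add_one_eq_Ioc, Finset.sum_Ico_eq_sum_range]
  simp only [Nat.add_sub_cancel, Nat.succ_sub_succ, Nat.add_sub_add_right, Nat.sub_zero]
  refine Finset.sum_congr rfl (fun r _ => ?_)
  congr 1; push_cast; ring

lemma prod_zpow_sum (s : Finset ℕ) (f : ℕ → ℤ) :
    ∏ j ∈ s, (2:ℝ) ^ (f j) = 2 ^ (∑ j ∈ s, f j) := by
  classical
  induction s using Finset.induction with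
  | empty => simp
  | insert _ _ h ih =>
    rw [Finset.prod_insert h, Finset.sum_insert h, ih, zpow_add₀ (two_ne_zero)]

include hpos hblock₁ hblock₂ in
lemma prod_eq (i : ℤ) (N : ℕ) :
    ∏ j ∈ Finset.Icc 1 N, w (i - (j:ℤ)) = (2:ℝ) ^ (T w i N) := by
  have h1 : ∏ j ∈ Finset.Icc 1 N, w (i - (j:ℤ))
      = ∏ j ∈ Finset.Icc 1 N, (2:ℝ) ^ (eps w (i - (j:ℤ))) :=
    Finset.prod_congr rfl (fun j _ => w_eq_pow hpos hblock₁ hblock₂ _)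
  rw [h1, prod_zpow_sum, T, ← Finset.Ico_add_one_right_eq_Icc, Finset.sum_Ico_eq_sum_range]
  congr 1
  refine Finset.sum_congr rfl (fun r _ => ?_)
  congr 1; push_cast; ring

end

end Stmt19

open Stmt19 in
theorem stmt_19 (w : ℤ → ℝ)
    (hpos : ∀ m : ℤ, 0 ≤ m → w m = 2)
    (hblock₁ : ∀ n : ℕ, 1 ≤ n → ∀ j : ℕ, n * (n - 1) < j → j ≤ n * n →
      w (-(j : ℤ)) = (2 : ℝ) ^ ((-1 : ℤ) ^ (n + 1)))
    (hblock₂ : ∀ n : ℕ, 1 ≤ n → ∀ j : ℕ, n * n < j → j ≤ n * (n + 1) →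
      w (-(j : ℤ)) = (2 : ℝ) ^ ((-1 : ℤ) ^ n)) :
    ∀ i : ℤ, ∃ C > (0 : ℝ),
      (∀ ℓ k : ℕ, 1 ≤ k →
        ((|i - (2 * k * (2 * k - 1) + k : ℕ)| : ℤ) + 1 : ℝ) ^ ℓ *
            |∏ j ∈ Finset.Icc 1 (2 * k * (2 * k - 1) + k) , w (i - (j : ℤ))| ≤
          C * ((|i - (2 * k * (2 * k - 1) + k : ℕ)| : ℤ) + 1 : ℝ) ^ ℓ / 2 ^ k) ∧
      ∀ ℓ : ℕ, Tendsto (fun k : ℕ =>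
          ((|i - (2 * k * (2 * k - 1) + k : ℕ)| : ℤ) + 1 : ℝ) ^ ℓ *
            |∏ j ∈ Finset.Icc 1 (2 * k * (2 * k - 1) + k), w (i - (j : ℤ))|)
        atTop (nhds 0) := by
  intro i
  set C : ℝ := 2 ^ (2 * i.natAbs) with hC
  have hCpos : (0:ℝ) < C := by positivity
  -- key estimate
  have key : ∀ k : ℕ, 1 ≤ k →
      |∏ j ∈ Finset.Icc 1 (2 * k * (2 * k - 1) + k), w (i - (j : ℤ))| ≤ C / 2 ^ k := by
    intro k hk
    set N : ℕ := 2 * k * (2 * k - 1) + k with hN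
    have hTz : T w 0 N = -(k:ℤ) := by
      rw [T_zero, hN, sig_nk hblock₁ hblock₂ k hk]
    have hTc := T_close (w := w) N i
    have hTle : T w i N ≤ 2 * (i.natAbs : ℤ) - k := by
      rw [hTz] at hTc
      rw [abs_le] at hTc
      have : |i| = (i.natAbs : ℤ) := Int.abs_eq_natAbs i
      omega
    rw [prod_eq hpos hblock₁ hblock₂ i N]
    rw [abs_of_pos (by positivity)]
    calc (2:ℝ) ^ (T w i N) ≤ 2 ^ (2 * (i.natAbs : ℤ) - k) :=
          zpow_le_zpow_right₀ one_le_two hTle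
      _ = C / 2 ^ k := by
          rw [zpow_sub₀ two_ne_zero, hC]
          norm_num [zpow_natCast]
          rw [← zpow_natCast (2:ℝ) (2 * i.natAbs)]
          push_cast
          ring_nf
  refine ⟨C, hCpos, ?_, ?_⟩
  · intro ℓ k hk
    set A : ℝ := ((|i - (2 * k * (2 * k - 1) + k : ℕ)| : ℤ) + 1 : ℝ) with hA
    have hA0 : (0:ℝ) ≤ A := by
      rw [hA]
      have h' : (0:ℝ) ≤ ((|i - (2 * k * (2 * k - 1) + k : ℕ)| : ℤ) : ℝ) := by
        exact_mod_cast abs_nonneg _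
      linarith
    have : C * A ^ ℓ / 2 ^ k = A ^ ℓ * (C / 2 ^ k) := by ring
    rw [this]
    exact mul_le_mul_of_nonneg_left (key k hk) (pow_nonneg hA0 ℓ)
  · intro ℓ
    have hg : Tendsto (fun k : ℕ =>
        (C * ((i.natAbs : ℝ) + 5) ^ ℓ) * ((k:ℝ) ^ (2*ℓ) / 2 ^ k)) atTop (nhds 0) := by
      have h := (tendsto_pow_const_div_const_pow_of_one_lt (2*ℓ)
        (one_lt_two (α := ℝ))).const_mul (C * ((i.natAbs : ℝ) + 5) ^ ℓ)
      simpa using h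
    refine squeeze_zero' ?_ ?_ hg
    · filter_upwards with k
      have h' : (0:ℝ) ≤ ((|i - (2 * k * (2 * k - 1) + k : ℕ)| : ℤ) : ℝ) := by
        exact_mod_cast abs_nonneg _
      exact mul_nonneg (pow_nonneg (by linarith) ℓ) (abs_nonneg _)
    · filter_upwards [eventually_ge_atTop 1] with k hk
      have hkey := key k hk
      set A : ℝ := ((|i - (2 * k * (2 * k - 1) + k : ℕ)| : ℤ) + 1 : ℝ) with hA
      have h' : (0:ℝ) ≤ ((|i - (2 * k * (2 * k - 1) + k : ℕ)| : ℤ) : ℝ) := by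
        exact_mod_cast abs_nonneg _
      have hA0 : (0:ℝ) ≤ A := by rw [hA]; linarith
      have hZ : |i - ((2 * k * (2 * k - 1) + k : ℕ):ℤ)| ≤ (i.natAbs : ℤ) + 4 * (k:ℤ)^2 := by
        have h1 : |i - ((2 * k * (2 * k - 1) + k : ℕ):ℤ)|
            ≤ |i| + |(((2 * k * (2 * k - 1) + k : ℕ)):ℤ)| := by
          have h0 := abs_sub_le i 0 ((2 * k * (2 * k - 1) + k : ℕ):ℤ)
          simp only [sub_zero, zero_sub, abs_neg] at h0
          exact h0
        have h2 : ((2 * k * (2 * k - 1) + k : ℕ) : ℤ) ≤ 4 * (k:ℤ)^2 := by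
          have h9 : 2*k - 1 + 1 = 2*k := by omega
          exact_mod_cast (show (2 * k * (2 * k - 1) + k) ≤ 4 * k^2 by nlinarith [h9])
        have h3 : |(((2 * k * (2 * k - 1) + k : ℕ)):ℤ)|
            = (((2 * k * (2 * k - 1) + k : ℕ)):ℤ) := abs_of_nonneg (by positivity)
        rw [Int.abs_eq_natAbs i] at h1
        linarith
      have hk1 : (1:ℝ) ≤ (k:ℝ)^2 := by
        have : (1:ℝ) ≤ (k:ℝ) := by exact_mod_cast hk
        nlinarith
      have hA1 : A ≤ ((i.natAbs:ℝ) + 5) * (k:ℝ)^2 := by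
        have hZR : ((|i - (2 * k * (2 * k - 1) + k : ℕ)| : ℤ) : ℝ)
            ≤ (i.natAbs : ℝ) + 4 * (k:ℝ)^2 :=
          calc ((|i - (2 * k * (2 * k - 1) + k : ℕ)| : ℤ) : ℝ)
              ≤ (((i.natAbs : ℤ) + 4 * (k:ℤ)^2 : ℤ) : ℝ) := by exact_mod_cast hZ
            _ = (i.natAbs : ℝ) + 4 * (k:ℝ)^2 := by
                push_cast
                rw [Nat.cast_natAbs, Int.cast_abs]
        rw [hA]
        have hnn : (0:ℝ) ≤ (i.natAbs : ℝ) := Nat.cast_nonneg _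
        nlinarith [mul_nonneg hnn (show (0:ℝ) ≤ (k:ℝ)^2 - 1 by linarith)]
      calc A ^ ℓ * |∏ j ∈ Finset.Icc 1 (2 * k * (2 * k - 1) + k), w (i - (j : ℤ))|
          ≤ A ^ ℓ * (C / 2^k) :=
            mul_le_mul_of_nonneg_left hkey (pow_nonneg hA0 ℓ)
        _ ≤ (((i.natAbs:ℝ)+5) * (k:ℝ)^2) ^ ℓ * (C / 2^k) := by
            exact mul_le_mul_of_nonneg_right (pow_le_pow_left₀ hA0 hA1 ℓ) (by positivity)
        _ = (C * ((i.natAbs:ℝ)+5)^ℓ) * ((k:ℝ)^(2*ℓ) / 2^k) := by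
            rw [mul_pow, ← pow_mul]
            ring
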